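/- Let φ : U → ℂ be analytic on an open set U ⊆ ℂ² containing a real point (α,β), with all derivatives D^m φ real at real points, and suppose Re φ(α+iu, β+iv) ≤ φ(α,β) − c(u²+v²) for all real u,v with |u|,|v| ≤ r (for constants c, r > 0). Then the Hessian D²φ(α,β) (a real symmetric 2×2 matrix) satisfies D²φ(α,β)[u,v] ≥ 2c(u²+v²) for all real u,v; in particular det(D²φ(α,β)) ≥ 4c². -/

import Mathlib

open Complex

open Set

lemma key1d {g g' : ℝ → ℝ} {q K δ : ℝ} (hδ : 0 < δ)
    (hg : ∀ t ∈ Set.Ioo (-δ) δ, HasDerivAt g (g' t) t)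
    (hg'' : HasDerivAt g' q 0) (hg'0 : g' 0 = 0)
    (hle : ∀ t ∈ Set.Ioo (-δ) δ, g t ≤ g 0 - K * t ^ 2) :
    q ≤ -2 * K := by
  by_contra hcon
  push_neg at hcon
  set ε := (q + 2 * K) / 2 with hεdef
  have hεpos : 0 < ε := by rw [hεdef]; linarith
  have hslope := hasDerivAt_iff_tendsto_slope.1 hg''
  have hev : ∀ᶠ s in nhdsWithin (0:ℝ) {(0:ℝ)}ᶜ, q - ε < slope g' 0 s :=
    hslope.eventually (eventually_gt_nhds (by linarith))
  rw [Filter.Eventually, Metric.mem_nhdsWithin_iff] at hev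
  obtain ⟨δ', hδ'pos, hδ'⟩ := hev
  set t₀ := min δ δ' / 2 with ht₀def
  have ht₀pos : 0 < t₀ := by positivity
  have ht₀δ : t₀ < δ := by
    have := min_le_left δ δ'; rw [ht₀def]; linarith
  have ht₀δ' : t₀ < δ' := by
    have := min_le_right δ δ'; rw [ht₀def]; linarith
  -- derivative lower bound on (0, t₀]
  have hder : ∀ s ∈ Set.Ioo (0:ℝ) t₀, (q - ε) * s ≤ g' s := by
    intro s hs
    have hs0 : s ≠ 0 := ne_of_gt hs.1
    have hsd : s ∈ Metric.ball (0:ℝ) δ' := by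
      rw [Metric.mem_ball, Real.dist_eq, sub_zero, abs_of_pos hs.1]; linarith [hs.2]
    have : q - ε < slope g' 0 s := hδ' ⟨hsd, by simpa using hs0⟩
    rw [slope_def_field, hg'0, sub_zero, sub_zero, lt_div_iff₀ hs.1] at this
    linarith
  -- monotonicity of F
  set F := fun t => g t - (q - ε) / 2 * t ^ 2 with hFdef
  have hFder : ∀ x ∈ Set.Ioo (-δ) δ, HasDerivAt F (g' x - (q - ε) * x) x := by
    intro x hx
    have h1 : HasDerivAt (fun t : ℝ => (q - ε) / 2 * t ^ 2) ((q - ε) / 2 * (2 * x)) x := by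
      have := (hasDerivAt_pow 2 x).const_mul ((q - ε) / 2)
      simpa using this
    have := (hg x hx).sub h1
    have e : g' x - (q - ε) * x = g' x - (q - ε) / 2 * (2 * x) := by ring
    rw [e]; exact this
  have hmono : MonotoneOn F (Set.Icc 0 t₀) := by
    apply monotoneOn_of_deriv_nonneg (convex_Icc 0 t₀)
    · intro x hx
      have hx' : x ∈ Set.Ioo (-δ) δ := ⟨by linarith [hx.1], by linarith [hx.2]⟩
      exact (hFder x hx').continuousAt.continuousWithinAt
    · intro x hx
      rw [interior_Icc] at hx
      have hx' : x ∈ Set.Ioo (-δ) δ := ⟨by linarith [hx.1], by linarith [hx.2]⟩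
      exact (hFder x hx').differentiableAt.differentiableWithinAt
    · intro x hx
      rw [interior_Icc] at hx
      have hx' : x ∈ Set.Ioo (-δ) δ := ⟨by linarith [hx.1], by linarith [hx.2]⟩
      rw [(hFder x hx').deriv]
      have := hder x hx
      linarith
  have hF0 : F 0 ≤ F t₀ :=
    hmono (Set.left_mem_Icc.2 (le_of_lt ht₀pos)) (Set.right_mem_Icc.2 (le_of_lt ht₀pos))
      (le_of_lt ht₀pos)
  have hle0 : g t₀ ≤ g 0 - K * t₀ ^ 2 := hle t₀ ⟨by linarith, ht₀δ⟩
  rw [hFdef] at hF0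
  simp only [ne_eq, OfNat.ofNat_ne_zero, not_false_eq_true, zero_pow, mul_zero, sub_zero] at hF0
  nlinarith [mul_pos (show (0:ℝ) < q + 2*K by linarith) (mul_pos ht₀pos ht₀pos), hεdef]

set_option maxHeartbeats 1000000 in
/-- If `φ` is analytic on an open set `U ⊆ ℂ²` containing a real point `(α,β)`, all its
derivatives are real at real points, and
`Re φ(α+iu, β+iv) ≤ φ(α,β) − c(u²+v²)` for `|u|,|v| ≤ r`, then the (real) Hessian
quadratic form at `(α,β)` satisfies `D²φ(α,β)[u,v] ≥ 2c(u²+v²)`, and its determinant is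
at least `4c²`. -/
theorem hessian_posdef_of_modulus_drop
    (U : Set (ℂ × ℂ)) (hU : IsOpen U) (φ : ℂ × ℂ → ℂ)
    (hφ : AnalyticOnNhd ℂ φ U)
    (α β : ℝ) (hmem : ((α : ℂ), (β : ℂ)) ∈ U)
    (hreal : ∀ (m : ℕ) (a b : ℝ), ((a : ℂ), (b : ℂ)) ∈ U →
      ∀ w : Fin m → ℝ × ℝ,
        (iteratedFDeriv ℂ m φ ((a : ℂ), (b : ℂ))
          (fun i => (((w i).1 : ℂ), ((w i).2 : ℂ)))).im = 0)
    (c r : ℝ) (hc : 0 < c) (hr : 0 < r)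
    (hdrop : ∀ u v : ℝ, |u| ≤ r → |v| ≤ r →
      (φ ((α : ℂ) + u * Complex.I, (β : ℂ) + v * Complex.I)).re
        ≤ (φ ((α : ℂ), (β : ℂ))).re - c * (u ^ 2 + v ^ 2)) :
    (∀ u v : ℝ,
      2 * c * (u ^ 2 + v ^ 2) ≤
        (iteratedFDeriv ℂ 2 φ ((α : ℂ), (β : ℂ)) (fun _ => ((u : ℂ), (v : ℂ)))).re) ∧
    4 * c ^ 2 ≤
      (iteratedFDeriv ℂ 2 φ ((α : ℂ), (β : ℂ)) (fun _ => ((1 : ℂ), (0 : ℂ)))).re *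
        (iteratedFDeriv ℂ 2 φ ((α : ℂ), (β : ℂ)) (fun _ => ((0 : ℂ), (1 : ℂ)))).re -
      (iteratedFDeriv ℂ 2 φ ((α : ℂ), (β : ℂ)) ![((1 : ℂ), (0 : ℂ)), ((0 : ℂ), (1 : ℂ))]).re
        ^ 2 := by
  set z₀ : ℂ × ℂ := ((α : ℂ), (β : ℂ)) with hz₀def
  have hF : AnalyticOnNhd ℂ (fderiv ℂ φ) U := hφ.fderiv
  set D2 := fderiv ℂ (fderiv ℂ φ) z₀ with hD2def
  -- the key quadratic bound
  have key : ∀ u v : ℝ, 2 * c * (u ^ 2 + v ^ 2) ≤ (D2 ((u:ℂ), (v:ℂ)) ((u:ℂ), (v:ℂ))).re := by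
    intro u v
    set e : ℂ × ℂ := ((u:ℂ), (v:ℂ)) with hedef
    set w : ℂ × ℂ := I • e with hwdef
    set γ : ℝ → ℂ × ℂ := fun t => z₀ + t • w with hγdef
    have hγ0 : γ 0 = z₀ := by simp [hγdef]
    have hγcont : Continuous γ := by fun_prop
    have hUnhds : γ ⁻¹' U ∈ nhds (0:ℝ) :=
      hγcont.continuousAt.preimage_mem_nhds (by rw [hγ0]; exact hU.mem_nhds hmem)
    obtain ⟨δ₀, hδ₀pos, hδ₀⟩ := Metric.mem_nhds_iff.1 hUnhds
    set S : ℝ := |u| + |v| + 1 with hSdef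
    have hSpos : (0:ℝ) < S := by positivity
    set δ : ℝ := min (δ₀ / 2) (r / S) with hδdef
    have hδpos : 0 < δ := lt_min (by linarith) (by positivity)
    have hmemU : ∀ t ∈ Set.Ioo (-δ) δ, γ t ∈ U := by
      intro t ht
      apply hδ₀
      rw [Metric.mem_ball, Real.dist_eq, sub_zero]
      have h1 : |t| < δ := abs_lt.2 ⟨ht.1, ht.2⟩
      have h2 : δ ≤ δ₀ / 2 := min_le_left _ _
      linarith
    have hγform : ∀ t : ℝ, γ t
        = ((α : ℂ) + ((t*u : ℝ) : ℂ) * Complex.I, (β : ℂ) + ((t*v : ℝ) : ℂ) * Complex.I) := by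
      intro t
      rw [hγdef]
      simp only [hwdef, hedef, hz₀def, Prod.smul_mk, smul_eq_mul, Prod.mk_add_mk]
      apply Prod.ext <;> · simp [Complex.real_smul]; push_cast; ring
    have hγder : ∀ t : ℝ, HasDerivAt γ w t := by
      intro t
      have h : HasDerivAt (fun t : ℝ => t • w) ((1:ℝ) • w) t := (hasDerivAt_id t).smul_const w
      simpa [hγdef, one_smul] using h.const_add z₀
    set g : ℝ → ℝ := fun t => (φ (γ t)).re with hgdef
    set g' : ℝ → ℝ := fun t => ((fderiv ℂ φ (γ t)) w).re with hg'def
    have hg : ∀ t ∈ Set.Ioo (-δ) δ, HasDerivAt g (g' t) t := by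
      intro t ht
      have hd1 : HasFDerivAt φ ((fderiv ℂ φ (γ t)).restrictScalars ℝ) (γ t) :=
        ((hφ _ (hmemU t ht)).differentiableAt.hasFDerivAt).restrictScalars ℝ
      have hcomp : HasDerivAt (fun t => φ (γ t)) ((fderiv ℂ φ (γ t)) w) t :=
        hd1.comp_hasDerivAt t (hγder t)
      exact (Complex.reCLM.hasFDerivAt.comp_hasDerivAt t hcomp)
    have hg'' : HasDerivAt g' ((D2 w w).re) 0 := by
      have hd2 : HasFDerivAt (fderiv ℂ φ) (D2.restrictScalars ℝ) (γ 0) := by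
        rw [hγ0]
        exact ((hF _ hmem).differentiableAt.hasFDerivAt).restrictScalars ℝ
      have hcomp : HasDerivAt (fun t => fderiv ℂ φ (γ t)) (D2 w) 0 :=
        hd2.comp_hasDerivAt 0 (hγder 0)
      have hL : HasFDerivAt (fun A : ℂ × ℂ →L[ℂ] ℂ => (A w).re)
          (Complex.reCLM.comp ((ContinuousLinearMap.apply ℂ ℂ w).restrictScalars ℝ))
          ((fun t => fderiv ℂ φ (γ t)) 0) :=
        (Complex.reCLM.comp ((ContinuousLinearMap.apply ℂ ℂ w).restrictScalars ℝ)).hasFDerivAt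
      have := hL.comp_hasDerivAt 0 hcomp
      exact this
    have hg'0 : g' 0 = 0 := by
      have h1 := hreal 1 α β hmem (fun _ => (u, v))
      rw [iteratedFDeriv_one_apply] at h1
      have h2 : g' 0 = ((fderiv ℂ φ z₀) (I • e)).re := by
        rw [hg'def]; simp only [hγ0, hwdef]
      rw [h2, map_smul, smul_eq_mul, Complex.I_mul_re, neg_eq_zero]
      convert h1 using 2
    have hle : ∀ t ∈ Set.Ioo (-δ) δ, g t ≤ g 0 - (c * (u ^ 2 + v ^ 2)) * t ^ 2 := by
      intro t ht
      have h1 : |t| ≤ r / S := le_of_lt (lt_of_lt_of_le (abs_lt.2 ⟨ht.1, ht.2⟩) (min_le_right _ _))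
      have h1' : |t| * S ≤ r := by
        rw [le_div_iff₀ hSpos] at h1
        exact h1
      have hu : |t * u| ≤ r := by
        rw [abs_mul]
        nlinarith [abs_nonneg t, abs_nonneg u, abs_nonneg v]
      have hv : |t * v| ≤ r := by
        rw [abs_mul]
        nlinarith [abs_nonneg t, abs_nonneg u, abs_nonneg v]
      have hd := hdrop (t * u) (t * v) hu hv
      have hgt : g t = (φ ((α : ℂ) + ((t*u : ℝ) : ℂ) * Complex.I,
          (β : ℂ) + ((t*v : ℝ) : ℂ) * Complex.I)).re := by
        simp only [hgdef]; rw [hγform t]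
      have hg0 : g 0 = (φ z₀).re := by simp only [hgdef]; rw [hγ0]
      rw [hgt, hg0]
      have heq : c * ((t*u) ^ 2 + (t*v) ^ 2) = (c * (u ^ 2 + v ^ 2)) * t ^ 2 := by ring
      rw [hz₀def]
      linarith [hd, heq.ge, heq.le]
    have hkey := key1d hδpos hg hg'' hg'0 hle
    have hD2w : D2 w w = -(D2 e e) := by
      rw [hwdef, map_smul]
      simp only [ContinuousLinearMap.smul_apply, map_smul, smul_smul, Complex.I_mul_I]
      simp
    rw [hD2w] at hkey
    simp only [Complex.neg_re] at hkey
    have : 2 * (c * (u ^ 2 + v ^ 2)) ≤ (D2 e e).re := by linarith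
    simpa [hedef, mul_assoc] using this
  -- symmetry of the second derivative
  have hsymm : ∀ x y, D2 x y = D2 y x := by
    have hcd : ContDiffAt ℂ 2 φ z₀ := (hφ _ hmem).contDiffAt
    have h := hcd.isSymmSndFDerivAt (by norm_num)
    exact fun x y => h x y
  constructor
  · intro u v
    rw [iteratedFDeriv_two_apply]
    exact key u v
  · rw [iteratedFDeriv_two_apply, iteratedFDeriv_two_apply, iteratedFDeriv_two_apply]
    simp only [Matrix.cons_val_zero, Matrix.cons_val_one, Matrix.head_cons]
    set e1 : ℂ × ℂ := ((1:ℂ), (0:ℂ)) with he1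
    set e2 : ℂ × ℂ := ((0:ℂ), (1:ℂ)) with he2
    set a : ℝ := (D2 e1 e1).re with ha
    set b : ℝ := (D2 e1 e2).re with hb
    set d : ℝ := (D2 e2 e2).re with hd
    have hexp : ∀ u v : ℝ, (D2 ((u:ℂ), (v:ℂ)) ((u:ℂ), (v:ℂ))).re
        = u ^ 2 * a + 2 * u * v * b + v ^ 2 * d := by
      intro u v
      have hsplit : ((u:ℂ), (v:ℂ)) = (u:ℂ) • e1 + (v:ℂ) • e2 := by
        simp [he1, he2, Prod.ext_iff]
      rw [hsplit]
      simp only [map_add, map_smul, ContinuousLinearMap.add_apply,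
        ContinuousLinearMap.smul_apply, smul_eq_mul]
      rw [hsymm e2 e1]
      simp only [Complex.add_re, Complex.re_ofReal_mul, ha, hb, hd]
      ring
    have hP : ∀ u v : ℝ, 2 * c * (u ^ 2 + v ^ 2) ≤ u ^ 2 * a + 2 * u * v * b + v ^ 2 * d := by
      intro u v; rw [← hexp]; exact key u v
    have ha2 : 2 * c ≤ a := by have := hP 1 0; linarith
    have hd2 : 2 * c ≤ d := by have := hP 0 1; linarith
    have hquad : ∀ t : ℝ, 0 ≤ (a - 2*c) * (t * t) + (2 * b) * t + (d - 2*c) := by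
      intro t; have := hP t 1; nlinarith
    have hdisc : discrim (a - 2*c) (2*b) (d - 2*c) ≤ 0 := discrim_le_zero hquad
    rw [discrim] at hdisc
    nlinarith [hdisc, mul_nonneg hc.le (by linarith : (0:ℝ) ≤ a - 2*c),
      mul_nonneg hc.le (by linarith : (0:ℝ) ≤ d - 2*c)]
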